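/- Let G be a locally compact group, a ∈ G aperiodic, w a weight on G with w, w⁻¹ ∈ L^∞(G), Φ a Δ₂-regular Young function, and assume for each compact K ⊆ G with λ(K) > 0 there exist Borel sets E_k ⊆ K with λ(E_k) → λ(K) and a subsequence (n_k) such that ‖φ_{n_k}|_{E_k}‖_∞ → 0 and ‖φ̃_{n_k}|_{E_k}‖_∞ → 0, where φ_n(x) = ∏_{j=1}^n w(x a^j) and φ̃_n(x) = (∏_{j=0}^{n−1} w(x a^{−j}))⁻¹. Then the weighted translation T_{a,w} is topologically transitive on L^Φ(G). -/

import Mathlib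

open MeasureTheory Filter Set Topology
open scoped ENNReal

/-- A Young function: continuous, even, convex, vanishing at 0, positive on positives,
tending to infinity. -/
structure IsYoung (Φ : ℝ → ℝ) : Prop where
  continuous : Continuous Φ
  even : ∀ t, Φ (-t) = Φ t
  convex : ConvexOn ℝ Set.univ Φ
  zero : Φ 0 = 0
  pos : ∀ t : ℝ, 0 < t → 0 < Φ t
  tendsto_top : Tendsto Φ atTop atTop

/-- The complementary Young function Ψ(y) = sup { x|y| − Φ(x) : x ≥ 0 }. -/
noncomputable def complementaryYoung (Φ : ℝ → ℝ) (y : ℝ) : ℝ :=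
  sSup {z : ℝ | ∃ x : ℝ, 0 ≤ x ∧ z = x * |y| - Φ x}

/-- Generalized inverse of a Young function on [0, ∞). -/
noncomputable def youngInv (Φ : ℝ → ℝ) (t : ℝ) : ℝ :=
  sSup {s : ℝ | 0 ≤ s ∧ Φ s ≤ t}

/-- The Luxemburg norm N_Φ(f) = inf { k > 0 : ∫ Φ(|f|/k) dμ ≤ 1 }. -/
noncomputable def luxNorm {G : Type*} [MeasurableSpace G] (Φ : ℝ → ℝ) (μ : Measure G)
    (f : G → ℂ) : ℝ :=
  sInf {k : ℝ | 0 < k ∧ ∫⁻ x, ENNReal.ofReal (Φ (‖f x‖ / k)) ∂μ ≤ 1}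

/-- Membership in the Orlicz space L^Φ(G). -/
def MemOrlicz {G : Type*} [MeasurableSpace G] (Φ : ℝ → ℝ) (μ : Measure G)
    (f : G → ℂ) : Prop :=
  Measurable f ∧ ∃ α : ℝ, 0 < α ∧ ∫⁻ x, ENNReal.ofReal (Φ (α * ‖f x‖)) ∂μ < ⊤

/-- The weighted translation operator T_{a,w} f (x) = w(x) f(x a⁻¹). -/
noncomputable def wT {G : Type*} [Group G] (a : G) (w : G → ℝ) (f : G → ℂ) : G → ℂ :=
  fun x => (w x : ℂ) * f (x * a⁻¹)

/-- The operator S_{a,w} h (x) = h(xa) / w(xa). -/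
noncomputable def wS {G : Type*} [Group G] (a : G) (w : G → ℝ) (h : G → ℂ) : G → ℂ :=
  fun x => h (x * a) / (w (x * a) : ℂ)

/-- φ_n(x) = ∏_{j=1}^n w(x a^j). -/
noncomputable def phiW {G : Type*} [Group G] (a : G) (w : G → ℝ) (n : ℕ) (x : G) : ℝ :=
  ∏ j ∈ Finset.Icc 1 n, w (x * a ^ j)

/-- φ̃_n(x) = (∏_{j=0}^{n-1} w(x a^{-j}))⁻¹. -/
noncomputable def phiTW {G : Type*} [Group G] (a : G) (w : G → ℝ) (n : ℕ) (x : G) : ℝ :=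
  (∏ j ∈ Finset.range n, w (x * a ^ (-(j : ℤ))))⁻¹

/-- a is aperiodic: for every compact K there is M with K ∩ K a^{±n} = ∅ for all n > M. -/
def AperiodicElem {G : Type*} [Group G] [TopologicalSpace G] (a : G) : Prop :=
  ∀ K : Set G, IsCompact K → ∃ M : ℕ, ∀ n : ℕ, M < n →
    K ∩ ((fun x => x * a ^ n) '' K) = ∅ ∧ K ∩ ((fun x => x * (a ^ n)⁻¹) '' K) = ∅

/-- Δ₂-regularity of a Young function relative to the (non)compactness of G. -/
def Delta2Regular (G : Type*) [TopologicalSpace G] (Φ : ℝ → ℝ) : Prop :=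
  (CompactSpace G → ∃ M : ℝ, 0 < M ∧ ∃ t₀ : ℝ, 0 < t₀ ∧
      ∀ t : ℝ, t₀ ≤ t → Φ (2 * t) ≤ M * Φ t) ∧
  (¬ CompactSpace G → ∃ M : ℝ, 0 < M ∧ ∀ t : ℝ, 0 < t → Φ (2 * t) ≤ M * Φ t)

/-- Topological transitivity of T on L^Φ(G). -/
def OrliczTransitive {G : Type*} [MeasurableSpace G] (Φ : ℝ → ℝ) (μ : Measure G)
    (T : (G → ℂ) → (G → ℂ)) : Prop :=
  ∀ f g : G → ℂ, MemOrlicz Φ μ f → MemOrlicz Φ μ g → ∀ ε : ℝ, 0 < ε →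
    ∃ h : G → ℂ, MemOrlicz Φ μ h ∧ ∃ n : ℕ,
      luxNorm Φ μ (h - f) < ε ∧ luxNorm Φ μ (T^[n] h - g) < ε

/-- Topological mixing of T on L^Φ(G). -/
def OrliczMixing {G : Type*} [MeasurableSpace G] (Φ : ℝ → ℝ) (μ : Measure G)
    (T : (G → ℂ) → (G → ℂ)) : Prop :=
  ∀ f g : G → ℂ, MemOrlicz Φ μ f → MemOrlicz Φ μ g → ∀ ε : ℝ, 0 < ε →
    ∃ N : ℕ, ∀ n : ℕ, N ≤ n → ∃ h : G → ℂ, MemOrlicz Φ μ h ∧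
      luxNorm Φ μ (h - f) < ε ∧ luxNorm Φ μ (T^[n] h - g) < ε

/-- Recurrence of T on L^Φ(G). -/
def OrliczRecurrent {G : Type*} [MeasurableSpace G] (Φ : ℝ → ℝ) (μ : Measure G)
    (T : (G → ℂ) → (G → ℂ)) : Prop :=
  ∀ f : G → ℂ, MemOrlicz Φ μ f → ∀ ε : ℝ, 0 < ε →
    ∃ n : ℕ, 1 ≤ n ∧ ∃ h : G → ℂ, MemOrlicz Φ μ h ∧
      luxNorm Φ μ (h - f) < ε ∧ luxNorm Φ μ (T^[n] h - f) < ε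

/-- Topological multiple recurrence of T on L^Φ(G). -/
def OrliczMultiplyRecurrent {G : Type*} [MeasurableSpace G] (Φ : ℝ → ℝ) (μ : Measure G)
    (T : (G → ℂ) → (G → ℂ)) : Prop :=
  ∀ L : ℕ, 1 ≤ L → ∀ f : G → ℂ, MemOrlicz Φ μ f → ∀ ε : ℝ, 0 < ε →
    ∃ n : ℕ, 1 ≤ n ∧ ∃ h : G → ℂ, MemOrlicz Φ μ h ∧
      luxNorm Φ μ (h - f) < ε ∧
      ∀ l : ℕ, 1 ≤ l → l ≤ L → luxNorm Φ μ (T^[l * n] h - f) < ε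

/-- Density of the set of periodic points of T in L^Φ(G). -/
def OrliczDensePeriodic {G : Type*} [MeasurableSpace G] (Φ : ℝ → ℝ) (μ : Measure G)
    (T : (G → ℂ) → (G → ℂ)) : Prop :=
  ∀ f : G → ℂ, MemOrlicz Φ μ f → ∀ ε : ℝ, 0 < ε →
    ∃ g : G → ℂ, MemOrlicz Φ μ g ∧ (∃ n : ℕ, 1 ≤ n ∧ T^[n] g = g) ∧
      luxNorm Φ μ (g - f) < ε

/-- The weight condition for transitivity/recurrence. -/
def WeightCondition {G : Type*} [Group G] [TopologicalSpace G] [MeasurableSpace G]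
    (μ : Measure G) (a : G) (w : G → ℝ) : Prop :=
  ∀ K : Set G, IsCompact K → 0 < μ K →
    ∃ E : ℕ → Set G, ∃ n : ℕ → ℕ, StrictMono n ∧
      (∀ k, MeasurableSet (E k) ∧ E k ⊆ K) ∧
      Tendsto (fun k => μ (E k)) atTop (nhds (μ K)) ∧
      ∀ ε : ℝ, 0 < ε → ∃ N : ℕ, ∀ k, N ≤ k → ∀ x ∈ E k,
        phiW a w (n k) x < ε ∧ phiTW a w (n k) x < ε

/-- The weight condition for chaos (density of periodic points). -/
def ChaosWeightCondition {G : Type*} [Group G] [TopologicalSpace G] [MeasurableSpace G]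
    (μ : Measure G) (a : G) (w : G → ℝ) : Prop :=
  ∀ K : Set G, IsCompact K → 0 < μ K →
    ∃ E : ℕ → Set G, ∃ n : ℕ → ℕ, StrictMono n ∧
      (∀ k, MeasurableSet (E k) ∧ E k ⊆ K) ∧
      Tendsto (fun k => μ (E k)) atTop (nhds (μ K)) ∧
      ∀ ε : ℝ, 0 < ε → ∃ N : ℕ, ∀ k, N ≤ k → ∀ x ∈ E k,
        (∑' l : ℕ, phiW a w ((l + 1) * n k) x) +
          (∑' l : ℕ, phiTW a w ((l + 1) * n k) x) < ε

section Helpers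

open scoped ENNReal

lemma IsYoung.nonneg {Φ : ℝ → ℝ} (hΦ : IsYoung Φ) (t : ℝ) : 0 ≤ Φ t := by
  rcases lt_trichotomy t 0 with h | h | h
  · rw [← hΦ.even]; exact (hΦ.pos (-t) (by linarith)).le
  · rw [h, hΦ.zero]
  · exact (hΦ.pos t h).le

lemma IsYoung.mono {Φ : ℝ → ℝ} (hΦ : IsYoung Φ) {s t : ℝ} (hs : 0 ≤ s) (hst : s ≤ t) :
    Φ s ≤ Φ t := by
  rcases eq_or_lt_of_le hst with rfl | hlt
  · exact le_rfl
  · have ht : 0 < t := lt_of_le_of_lt hs hlt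
    have h1 : (0:ℝ) ≤ 1 - s / t := by
      have : s / t ≤ 1 := (div_le_one ht).2 hst
      linarith
    have h2 : (0:ℝ) ≤ s / t := div_nonneg hs ht.le
    have := hΦ.convex.2 (Set.mem_univ (0:ℝ)) (Set.mem_univ t) h1 h2 (by ring)
    simp only [smul_eq_mul, mul_zero, zero_add, hΦ.zero] at this
    rw [div_mul_cancel₀ _ ht.ne'] at this
    calc Φ s ≤ (1 - s/t) * 0 + s/t * Φ t := by simpa using this
    _ ≤ Φ t := by
        have hΦt : 0 ≤ Φ t := hΦ.nonneg t
        nlinarith [h2, (div_le_one ht).2 hst]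

lemma IsYoung.combo {Φ : ℝ → ℝ} (hΦ : IsYoung Φ) {k₁ k₂ : ℝ} (hk₁ : 0 < k₁) (hk₂ : 0 < k₂)
    (u v : ℝ) :
    Φ ((u + v) / (k₁ + k₂)) ≤ k₁ / (k₁ + k₂) * Φ (u / k₁) + k₂ / (k₁ + k₂) * Φ (v / k₂) := by
  have hk : 0 < k₁ + k₂ := by linarith
  have := hΦ.convex.2 (Set.mem_univ (u / k₁)) (Set.mem_univ (v / k₂))
    (le_of_lt (div_pos hk₁ hk)) (le_of_lt (div_pos hk₂ hk)) (by field_simp)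
  simpa [smul_eq_mul, div_add_div _ _ hk₁.ne' hk₂.ne', show k₁/(k₁+k₂)*(u/k₁) + k₂/(k₁+k₂)*(v/k₂) = (u+v)/(k₁+k₂) by field_simp] using this

lemma luxNorm_lt {G : Type*} [MeasurableSpace G] {Φ : ℝ → ℝ} {μ : Measure G} {u : G → ℂ}
    {ε k : ℝ} (hk : 0 < k) (hkε : k < ε)
    (h : ∫⁻ x, ENNReal.ofReal (Φ (‖u x‖ / k)) ∂μ ≤ 1) :
    luxNorm Φ μ u < ε :=
  lt_of_le_of_lt (csInf_le ⟨0, fun _ hx => hx.1.le⟩ (Set.mem_setOf.2 ⟨hk, h⟩)) hkε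

lemma memOrlicz_add {G : Type*} [MeasurableSpace G] {Φ : ℝ → ℝ} (hΦ : IsYoung Φ)
    {μ : Measure G} {f g : G → ℂ} (hf : MemOrlicz Φ μ f) (hg : MemOrlicz Φ μ g) :
    MemOrlicz Φ μ (f + g) := by
  obtain ⟨mf, αf, hαf, hff⟩ := hf
  obtain ⟨mg, αg, hαg, hgf⟩ := hg
  refine ⟨mf.add mg, min αf αg / 2, by positivity, ?_⟩
  have hpt : ∀ x : G, ENNReal.ofReal (Φ (min αf αg / 2 * ‖(f + g) x‖)) ≤
      ENNReal.ofReal (Φ (αf * ‖f x‖)) + ENNReal.ofReal (Φ (αg * ‖g x‖)) := by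
    intro x
    have h1 : Φ (min αf αg / 2 * ‖(f + g) x‖) ≤
        1/2 * Φ (min αf αg * ‖f x‖) + 1/2 * Φ (min αf αg * ‖g x‖) := by
      have hcombo := hΦ.combo one_pos one_pos (min αf αg * ‖f x‖) (min αf αg * ‖g x‖)
      have hm : min αf αg / 2 * ‖(f + g) x‖ ≤
          (min αf αg * ‖f x‖ + min αf αg * ‖g x‖) / (1 + 1) := by
        have := norm_add_le (f x) (g x)
        have hmin : (0:ℝ) < min αf αg := lt_min hαf hαg
        rw [Pi.add_apply]
        nlinarith [norm_nonneg (f x + g x)]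
      refine le_trans (hΦ.mono (by positivity) hm) (le_trans hcombo ?_)
      simp only [div_one]
      norm_num
    have h2 : Φ (min αf αg * ‖f x‖) ≤ Φ (αf * ‖f x‖) :=
      hΦ.mono (by positivity) (mul_le_mul_of_nonneg_right (min_le_left _ _) (norm_nonneg _))
    have h3 : Φ (min αf αg * ‖g x‖) ≤ Φ (αg * ‖g x‖) :=
      hΦ.mono (by positivity) (mul_le_mul_of_nonneg_right (min_le_right _ _) (norm_nonneg _))
    calc ENNReal.ofReal (Φ (min αf αg / 2 * ‖(f + g) x‖))
        ≤ ENNReal.ofReal (Φ (αf * ‖f x‖) + Φ (αg * ‖g x‖)) := by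
          refine ENNReal.ofReal_le_ofReal ?_
          have := hΦ.nonneg (αf * ‖f x‖)
          have := hΦ.nonneg (αg * ‖g x‖)
          linarith
      _ ≤ _ := ENNReal.ofReal_add_le
  calc ∫⁻ x, ENNReal.ofReal (Φ (min αf αg / 2 * ‖(f + g) x‖)) ∂μ
      ≤ ∫⁻ x, (ENNReal.ofReal (Φ (αf * ‖f x‖)) + ENNReal.ofReal (Φ (αg * ‖g x‖))) ∂μ :=
        lintegral_mono hpt
    _ = (∫⁻ x, ENNReal.ofReal (Φ (αf * ‖f x‖)) ∂μ) + ∫⁻ x, ENNReal.ofReal (Φ (αg * ‖g x‖)) ∂μ :=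
        lintegral_add_left (ENNReal.measurable_ofReal.comp
          (hΦ.continuous.measurable.comp ((mf.norm).const_mul αf))) _
    _ < ⊤ := ENNReal.add_lt_top.2 ⟨hff, hgf⟩

lemma modular_add {G : Type*} [MeasurableSpace G] (μ : Measure G) {Φ : ℝ → ℝ}
    (hΦ : IsYoung Φ) {u v : G → ℂ} (hu : Measurable u) (hv : Measurable v)
    {k₁ k₂ : ℝ} (hk₁ : 0 < k₁) (hk₂ : 0 < k₂)
    (h1 : ∫⁻ x, ENNReal.ofReal (Φ (‖u x‖ / k₁)) ∂μ ≤ 1)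
    (h2 : ∫⁻ x, ENNReal.ofReal (Φ (‖v x‖ / k₂)) ∂μ ≤ 1) :
    ∫⁻ x, ENNReal.ofReal (Φ (‖u x + v x‖ / (k₁ + k₂))) ∂μ ≤ 1 := by
  have hk : 0 < k₁ + k₂ := by linarith
  have hmeas1 : Measurable fun x => ENNReal.ofReal (Φ (‖u x‖ / k₁)) :=
    ENNReal.measurable_ofReal.comp (hΦ.continuous.measurable.comp (hu.norm.div_const k₁))
  have hstep : ∀ x, ENNReal.ofReal (Φ (‖u x + v x‖ / (k₁ + k₂))) ≤
      ENNReal.ofReal (k₁/(k₁+k₂)) * ENNReal.ofReal (Φ (‖u x‖ / k₁)) +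
      ENNReal.ofReal (k₂/(k₁+k₂)) * ENNReal.ofReal (Φ (‖v x‖ / k₂)) := by
    intro x
    have hb : Φ (‖u x + v x‖ / (k₁ + k₂)) ≤
        k₁/(k₁+k₂) * Φ (‖u x‖ / k₁) + k₂/(k₁+k₂) * Φ (‖v x‖ / k₂) := by
      refine le_trans (hΦ.mono (by positivity) ?_) (hΦ.combo hk₁ hk₂ _ _)
      gcongr
      exact norm_add_le _ _
    calc ENNReal.ofReal (Φ (‖u x + v x‖ / (k₁ + k₂)))
        ≤ ENNReal.ofReal (k₁/(k₁+k₂) * Φ (‖u x‖ / k₁) + k₂/(k₁+k₂) * Φ (‖v x‖ / k₂)) :=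
          ENNReal.ofReal_le_ofReal hb
      _ = _ := by
          rw [ENNReal.ofReal_add (mul_nonneg (by positivity) (hΦ.nonneg _)) (mul_nonneg (by positivity) (hΦ.nonneg _)),
            ENNReal.ofReal_mul (by positivity), ENNReal.ofReal_mul (by positivity)]
  calc ∫⁻ x, ENNReal.ofReal (Φ (‖u x + v x‖ / (k₁ + k₂))) ∂μ
      ≤ ∫⁻ x, (ENNReal.ofReal (k₁/(k₁+k₂)) * ENNReal.ofReal (Φ (‖u x‖ / k₁)) +
        ENNReal.ofReal (k₂/(k₁+k₂)) * ENNReal.ofReal (Φ (‖v x‖ / k₂))) ∂μ :=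
        lintegral_mono hstep
    _ = ENNReal.ofReal (k₁/(k₁+k₂)) * ∫⁻ x, ENNReal.ofReal (Φ (‖u x‖ / k₁)) ∂μ +
        ENNReal.ofReal (k₂/(k₁+k₂)) * ∫⁻ x, ENNReal.ofReal (Φ (‖v x‖ / k₂)) ∂μ := by
        rw [lintegral_add_left (hmeas1.const_mul _), lintegral_const_mul' _ _ ENNReal.ofReal_ne_top,
          lintegral_const_mul' _ _ ENNReal.ofReal_ne_top]
    _ ≤ ENNReal.ofReal (k₁/(k₁+k₂)) * 1 + ENNReal.ofReal (k₂/(k₁+k₂)) * 1 := by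
        gcongr
    _ = 1 := by
        rw [mul_one, mul_one, ← ENNReal.ofReal_add (by positivity) (by positivity)]
        rw [← add_div, div_self hk.ne', ENNReal.ofReal_one]

lemma delta2_pow {Φ : ℝ → ℝ} (hΦ : IsYoung Φ) {M : ℝ} (hM0 : 0 < M)
    (hM : ∀ t : ℝ, 0 < t → Φ (2 * t) ≤ M * Φ t) :
    ∀ (j : ℕ) (t : ℝ), 0 ≤ t → Φ (2 ^ j * t) ≤ M ^ j * Φ t := by
  intro j
  induction j with
  | zero => intro t ht; simp
  | succ j ih =>
    intro t ht
    rcases eq_or_lt_of_le ht with rfl | ht'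
    · simp [hΦ.zero]
    · have h1 : Φ (2 ^ (j+1) * t) = Φ (2 * (2 ^ j * t)) := by ring_nf
      have h2 : Φ (2 * (2 ^ j * t)) ≤ M * Φ (2 ^ j * t) :=
        hM _ (by positivity)
      have h3 : M * Φ (2 ^ j * t) ≤ M * (M ^ j * Φ t) :=
        mul_le_mul_of_nonneg_left (ih t ht) hM0.le
      calc Φ (2 ^ (j+1) * t) ≤ M * (M ^ j * Φ t) := by rw [h1]; exact h2.trans h3
        _ = M ^ (j+1) * Φ t := by ring

lemma modular_finite_of_pos {G : Type*} [MeasurableSpace G] {μ : Measure G} {Φ : ℝ → ℝ}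
    (hΦ : IsYoung Φ) {M : ℝ} (hM0 : 0 < M) (hM : ∀ t : ℝ, 0 < t → Φ (2 * t) ≤ M * Φ t)
    {f : G → ℂ} {α : ℝ} (hα : 0 < α)
    (hfin : ∫⁻ x, ENNReal.ofReal (Φ (α * ‖f x‖)) ∂μ < ⊤) {β : ℝ} (hβ : 0 < β) :
    ∫⁻ x, ENNReal.ofReal (Φ (β * ‖f x‖)) ∂μ < ⊤ := by
  obtain ⟨j, hj⟩ : ∃ j : ℕ, β / α < 2 ^ j := pow_unbounded_of_one_lt _ one_lt_two
  have hβα : β ≤ 2 ^ j * α := by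
    rw [div_lt_iff₀ hα] at hj; linarith
  have hpt : ∀ x, ENNReal.ofReal (Φ (β * ‖f x‖)) ≤
      ENNReal.ofReal (M ^ j) * ENNReal.ofReal (Φ (α * ‖f x‖)) := by
    intro x
    rw [← ENNReal.ofReal_mul (by positivity)]
    refine ENNReal.ofReal_le_ofReal ?_
    calc Φ (β * ‖f x‖) ≤ Φ (2 ^ j * (α * ‖f x‖)) := by
          refine hΦ.mono (by positivity) ?_
          rw [← mul_assoc]
          exact mul_le_mul_of_nonneg_right hβα (norm_nonneg _)
      _ ≤ M ^ j * Φ (α * ‖f x‖) := delta2_pow hΦ hM0 hM j _ (by positivity)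
  calc ∫⁻ x, ENNReal.ofReal (Φ (β * ‖f x‖)) ∂μ
      ≤ ∫⁻ x, ENNReal.ofReal (M ^ j) * ENNReal.ofReal (Φ (α * ‖f x‖)) ∂μ := lintegral_mono hpt
    _ = ENNReal.ofReal (M ^ j) * ∫⁻ x, ENNReal.ofReal (Φ (α * ‖f x‖)) ∂μ :=
        lintegral_const_mul' _ _ ENNReal.ofReal_ne_top
    _ < ⊤ := ENNReal.mul_lt_top ENNReal.ofReal_lt_top hfin

lemma density_lemma {G : Type*} [TopologicalSpace G] [R1Space G] [SigmaCompactSpace G]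
    [MeasurableSpace G] [OpensMeasurableSpace G] (μ : Measure G) {Φ : ℝ → ℝ}
    (hΦ : IsYoung Φ) {f : G → ℂ} (hf : Measurable f) {k : ℝ} (hk : 0 < k)
    (hfin : ∫⁻ x, ENNReal.ofReal (Φ (‖f x‖ / k)) ∂μ < ⊤) :
    ∃ f₀ : G → ℂ, Measurable f₀ ∧ (∃ R : ℝ, 1 ≤ R ∧ ∀ x, ‖f₀ x‖ ≤ R) ∧
      (∃ C : Set G, IsCompact C ∧ IsClosed C ∧ ∀ x ∉ C, f₀ x = 0) ∧
      ∫⁻ x, ENNReal.ofReal (Φ (‖f x - f₀ x‖ / k)) ∂μ ≤ 1 := by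
  set F : G → ℝ≥0∞ := fun x => ENNReal.ofReal (Φ (‖f x‖ / k)) with hF
  have hFmeas : Measurable F :=
    ENNReal.measurable_ofReal.comp (hΦ.continuous.measurable.comp (hf.norm.div_const k))
  set A : ℕ → Set G := fun m => closure (compactCovering G m) ∩ {x | ‖f x‖ ≤ (m : ℝ)} with hA
  have hAm : ∀ m, MeasurableSet (A m) := fun m =>
    isClosed_closure.measurableSet.inter (measurableSet_le hf.norm measurable_const)
  have hAmono : Monotone A := by
    intro m₁ m₂ hm
    exact Set.inter_subset_inter (closure_mono (compactCovering_subset G hm))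
      (fun x hx => le_trans hx (by exact_mod_cast hm : (m₁:ℝ) ≤ m₂))
  have hAunion : ⋃ m, A m = Set.univ := by
    ext x
    simp only [Set.mem_iUnion, Set.mem_univ, iff_true]
    obtain ⟨m₁, hm₁⟩ : ∃ m, x ∈ compactCovering G m := by
      have := iUnion_compactCovering G
      have : x ∈ ⋃ n, compactCovering G n := by rw [this]; trivial
      exact Set.mem_iUnion.1 this
    refine ⟨max m₁ ⌈‖f x‖⌉₊, ?_, ?_⟩
    · exact subset_closure (compactCovering_subset G (le_max_left _ _) hm₁)
    · calc ‖f x‖ ≤ (⌈‖f x‖⌉₊ : ℝ) := Nat.le_ceil _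
        _ ≤ _ := by exact_mod_cast le_max_right m₁ _
  set ν := μ.withDensity F with hν
  have hνfin : ν Set.univ ≠ ⊤ := by
    rw [hν, withDensity_apply _ MeasurableSet.univ, setLIntegral_univ]
    exact hfin.ne
  have htend : Tendsto (fun m => ν ((A m)ᶜ)) atTop (𝓝 0) := by
    have h1 : Tendsto (⇑ν ∘ fun m => (A m)ᶜ) atTop (𝓝 (ν (⋂ m, (A m)ᶜ))) := by
      refine tendsto_measure_iInter_atTop (fun m => (hAm m).compl.nullMeasurableSet)
        (fun m₁ m₂ hm => Set.compl_subset_compl.2 (hAmono hm)) ⟨0, ?_⟩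
      exact ne_top_of_le_ne_top hνfin (measure_mono (Set.subset_univ _))
    have h2 : ⋂ m, (A m)ᶜ = ∅ := by
      rw [← Set.compl_iUnion, hAunion, Set.compl_univ]
    rw [h2] at h1
    simpa [Function.comp_def] using h1
  obtain ⟨m, hm⟩ : ∃ m, ν ((A m)ᶜ) ≤ 1 := by
    have := htend.eventually_lt_const (by norm_num : (0:ℝ≥0∞) < 1)
    exact this.exists.imp fun m h => h.le
  refine ⟨(A m).indicator f, hf.indicator (hAm m), ⟨max m 1, le_max_right _ _, ?_⟩,
    ⟨closure (compactCovering G m), (isCompact_compactCovering G m).closure,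
      isClosed_closure, ?_⟩, ?_⟩
  · intro x
    by_cases hx : x ∈ A m
    · rw [Set.indicator_of_mem hx]
      exact le_trans hx.2 (by exact_mod_cast le_max_left m 1)
    · rw [Set.indicator_of_notMem hx]; simp only [norm_zero]; positivity
  · intro x hx
    exact Set.indicator_of_notMem (fun hx' => hx hx'.1) f
  · have heq : ∀ x, ENNReal.ofReal (Φ (‖f x - (A m).indicator f x‖ / k)) =
        ((A m)ᶜ).indicator F x := by
      intro x
      by_cases hx : x ∈ A m
      · rw [Set.indicator_of_mem hx, sub_self, Set.indicator_of_notMem (by simpa using hx)]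
        simp [hΦ.zero]
      · rw [Set.indicator_of_notMem hx, sub_zero, Set.indicator_of_mem (by simpa using hx)]
    calc ∫⁻ x, ENNReal.ofReal (Φ (‖f x - (A m).indicator f x‖ / k)) ∂μ
        = ∫⁻ x, ((A m)ᶜ).indicator F x ∂μ := lintegral_congr heq
      _ = ν ((A m)ᶜ) := by
          rw [lintegral_indicator (hAm m).compl, hν, withDensity_apply _ (hAm m).compl]
      _ ≤ 1 := hm


section Ops

variable {G : Type*} [Group G] (a : G) (w : G → ℝ)

lemma wT_iter (u : G → ℂ) (n : ℕ) :
    (wT a w)^[n] u = fun x =>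
      ((∏ j ∈ Finset.range n, w (x * (a ^ j)⁻¹) : ℝ) : ℂ) * u (x * (a ^ n)⁻¹) := by
  induction n with
  | zero => funext x; simp
  | succ n ih =>
    funext x
    rw [Function.iterate_succ_apply', ih]
    show (w x : ℂ) * _ = _
    have hx : ∀ j : ℕ, x * a⁻¹ * (a ^ j)⁻¹ = x * (a ^ (j+1))⁻¹ := by
      intro j; rw [pow_succ]; group
    have hprod : (∏ j ∈ Finset.range (n+1), w (x * (a ^ j)⁻¹)) =
        w x * ∏ j ∈ Finset.range n, w (x * a⁻¹ * (a ^ j)⁻¹) := by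
      rw [Finset.prod_range_succ']
      simp only [hx, pow_zero, inv_one, mul_one]
      ring
    rw [hprod]
    push_cast
    rw [hx n]
    ring

lemma wS_iter (u : G → ℂ) (n : ℕ) :
    (wS a w)^[n] u = fun x =>
      u (x * a ^ n) / ((∏ j ∈ Finset.range n, w (x * a ^ (j+1)) : ℝ) : ℂ) := by
  induction n with
  | zero => funext x; simp
  | succ n ih =>
    funext x
    have hrw : (wS a w) ((wS a w)^[n] u) x = ((wS a w)^[n] u) (x * a) / (w (x * a) : ℂ) := rfl
    rw [Function.iterate_succ_apply', hrw, ih]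
    simp only
    have h1 : x * a * a ^ n = x * a ^ (n+1) := by rw [pow_succ']; group
    have h3 : (∏ j ∈ Finset.range (n+1), w (x * a ^ (j+1))) =
        (∏ j ∈ Finset.range n, w (x * a * a ^ (j+1))) * w (x * a) := by
      rw [Finset.prod_range_succ']
      congr 1
      · refine Finset.prod_congr rfl fun i _ => ?_
        congr 1
        rw [pow_succ' a (i+1), ← mul_assoc]
      · congr 1
        rw [pow_one]
    rw [h1, h3, div_div]
    push_cast
    ring_nf

lemma wT_wS (hw : ∀ x, w x ≠ 0) (u : G → ℂ) : wT a w (wS a w u) = u := by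
  funext x
  show (w x : ℂ) * (u (x * a⁻¹ * a) / (w (x * a⁻¹ * a) : ℂ)) = u x
  rw [inv_mul_cancel_right]
  rw [mul_div_cancel₀]
  exact_mod_cast hw x

lemma wT_iter_wS_iter (hw : ∀ x, w x ≠ 0) (u : G → ℂ) (n : ℕ) :
    (wT a w)^[n] ((wS a w)^[n] u) = u := by
  induction n with
  | zero => rfl
  | succ n ih =>
    rw [Function.iterate_succ_apply (wT a w), Function.iterate_succ_apply' (wS a w),
      wT_wS a w hw, ih]

lemma wT_iter_add (u v : G → ℂ) (n : ℕ) :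
    (wT a w)^[n] (u + v) = (wT a w)^[n] u + (wT a w)^[n] v := by
  funext x
  simp only [wT_iter, Pi.add_apply]
  ring

lemma phiW_eq (n : ℕ) (x : G) :
    phiW a w n x = ∏ j ∈ Finset.range n, w (x * a ^ (j+1)) := by
  induction n with
  | zero => simp [phiW]
  | succ n ih =>
    rw [phiW, Finset.prod_Icc_succ_top (by omega : 1 ≤ n + 1), ← phiW, ih,
      Finset.prod_range_succ]

lemma key_T (n : ℕ) (x : G) :
    (∏ j ∈ Finset.range n, w (x * a ^ n * (a ^ j)⁻¹)) = phiW a w n x := by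
  rw [phiW_eq, ← Finset.prod_range_reflect (fun i => w (x * a ^ (i+1))) n]
  refine Finset.prod_congr rfl fun j hj => ?_
  have hjn : j < n := Finset.mem_range.1 hj
  congr 1
  have h1 : n - 1 - j + 1 = n - j := by omega
  rw [h1]
  have h2 : a ^ (n - j) * a ^ j = a ^ n := by rw [← pow_add]; congr 1; omega
  rw [mul_assoc]
  congr 1
  rw [← h2, mul_inv_cancel_right]

lemma key_S (n : ℕ) (x : G) :
    ((∏ j ∈ Finset.range n, w (x * (a ^ n)⁻¹ * a ^ (j+1)))⁻¹ : ℝ) = phiTW a w n x := by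
  rw [phiTW]
  congr 1
  rw [← Finset.prod_range_reflect (fun i => w (x * a ^ (-(i : ℤ)))) n]
  refine Finset.prod_congr rfl fun j hj => ?_
  have hjn : j < n := Finset.mem_range.1 hj
  congr 1
  have h1 : -((n - 1 - j : ℕ) : ℤ) = ((j : ℤ) + 1) - n := by omega
  show x * (a ^ n)⁻¹ * a ^ (j + 1) = x * a ^ (-((n - 1 - j : ℕ) : ℤ))
  rw [h1, mul_assoc]
  congr 1
  have : a ^ (((j : ℤ) + 1) - n) = a ^ (-(n : ℤ)) * a ^ ((j : ℤ) + 1) := by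
    rw [← zpow_add]; congr 1; ring
  rw [this, zpow_neg, zpow_natCast]
  norm_cast

end Ops

end Helpers

theorem transitive_of_weight_condition {G : Type*} [Group G] [TopologicalSpace G] [IsTopologicalGroup G]
    [LocallyCompactSpace G] [SecondCountableTopology G] [MeasurableSpace G] [BorelSpace G]
    (μ : Measure G) [μ.IsMulRightInvariant] [IsFiniteMeasureOnCompacts μ] [μ.IsOpenPosMeasure]
    (a : G) (ha : AperiodicElem a) (w : G → ℝ) (hw : Continuous w)
    (hwpos : ∀ x, 0 < w x) (hwb : ∃ C : ℝ, ∀ x, w x ≤ C)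
    (hwib : ∃ c : ℝ, 0 < c ∧ ∀ x, c ≤ w x)
    (Φ : ℝ → ℝ) (hΦ : IsYoung Φ) (hΔ : Delta2Regular G Φ)
    (hcond : WeightCondition μ a w) :
    OrliczTransitive Φ μ (wT a w) := by
  intro f g hf hg ε hε
  -- G is not compact, since it contains an aperiodic element
  have hnc : ¬ CompactSpace G := by
    intro hc
    obtain ⟨M, hM⟩ := ha Set.univ isCompact_univ
    have h1 := (hM (M + 1) (Nat.lt_succ_self M)).1
    have h2 : (1 : G) ∈ Set.univ ∩ ((fun x => x * a ^ (M + 1)) '' Set.univ) :=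
      ⟨trivial, ⟨(a ^ (M + 1))⁻¹, trivial, by group⟩⟩
    rw [h1] at h2
    exact h2
  obtain ⟨M, hM0, hM⟩ := hΔ.2 hnc
  obtain ⟨c, hc, hcw⟩ := hwib
  have hwne : ∀ x : G, (w x : ℂ) ≠ 0 := fun x => by exact_mod_cast (hwpos x).ne'
  have hwne' : ∀ x : G, w x ≠ 0 := fun x => (hwpos x).ne'
  have hfinf : ∀ k : ℝ, 0 < k → ∫⁻ x, ENNReal.ofReal (Φ (‖f x‖ / k)) ∂μ < ⊤ := by
    intro k hk
    obtain ⟨α, hα, hfin⟩ := hf.2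
    have := modular_finite_of_pos hΦ hM0 hM hα hfin (show (0:ℝ) < k⁻¹ by positivity)
    simpa [div_eq_inv_mul] using this
  have hfing : ∀ k : ℝ, 0 < k → ∫⁻ x, ENNReal.ofReal (Φ (‖g x‖ / k)) ∂μ < ⊤ := by
    intro k hk
    obtain ⟨α, hα, hfin⟩ := hg.2
    have := modular_finite_of_pos hΦ hM0 hM hα hfin (show (0:ℝ) < k⁻¹ by positivity)
    simpa [div_eq_inv_mul] using this
  set k0 : ℝ := ε / 8 with hk0def
  have hk0 : 0 < k0 := by positivity
  obtain ⟨f₀, mf₀, ⟨Rf, hRf1, hRf⟩, ⟨Cf, hCfc, hCfcl, hCf0⟩, certf⟩ :=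
    density_lemma μ hΦ hf.1 hk0 (hfinf k0 hk0)
  obtain ⟨g₀, mg₀, ⟨Rg, hRg1, hRg⟩, ⟨Cg, hCgc, hCgcl, hCg0⟩, certg⟩ :=
    density_lemma μ hΦ hg.1 hk0 (hfing k0 hk0)
  set R : ℝ := max Rf Rg with hRdef
  have hR1 : 1 ≤ R := le_trans hRf1 (le_max_left _ _)
  have hR0 : 0 < R := lt_of_lt_of_le one_pos hR1
  have hf₀R : ∀ x, ‖f₀ x‖ ≤ R := fun x => le_trans (hRf x) (le_max_left _ _)
  have hg₀R : ∀ x, ‖g₀ x‖ ≤ R := fun x => le_trans (hRg x) (le_max_right _ _)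
  set K : Set G := Cf ∪ Cg with hKdef
  have hKc : IsCompact K := hCfc.union hCgc
  have hKcl : IsClosed K := hCfcl.union hCgcl
  have hKfin : μ K ≠ ⊤ := hKc.measure_lt_top.ne
  have c₁' : ∫⁻ x, ENNReal.ofReal (Φ (‖f₀ x - f x‖ / k0)) ∂μ ≤ 1 :=
    le_trans (le_of_eq (lintegral_congr fun x => by rw [norm_sub_rev])) certf
  have c₆' : ∫⁻ x, ENNReal.ofReal (Φ (‖g₀ x - g x‖ / k0)) ∂μ ≤ 1 :=
    le_trans (le_of_eq (lintegral_congr fun x => by rw [norm_sub_rev])) certg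
  by_cases hK : μ K = 0
  · -- degenerate case: f and g are both small
    refine ⟨f + g, memOrlicz_add hΦ hf hg, 0, ?_, ?_⟩
    · have hg0ae : ∀ᵐ x ∂μ, g₀ x = 0 := by
        refine measure_mono_null (fun x hx => ?_) hK
        simp only [Set.mem_compl_iff, Set.mem_setOf_eq, not_not] at hx ⊢
        by_contra hxK
        exact hx (hCg0 x fun hC => hxK (Set.mem_union_right _ hC))
      have hcert : ∫⁻ x, ENNReal.ofReal (Φ (‖(f + g - f) x‖ / k0)) ∂μ ≤ 1 := by
        refine le_trans (le_of_eq (lintegral_congr_ae ?_)) certg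
        filter_upwards [hg0ae] with x hx
        have : (f + g - f) x = g x - g₀ x := by
          simp only [Pi.sub_apply, Pi.add_apply, hx]; ring
        rw [this]
      exact luxNorm_lt hk0 (by rw [hk0def]; linarith) hcert
    · have hf0ae : ∀ᵐ x ∂μ, f₀ x = 0 := by
        refine measure_mono_null (fun x hx => ?_) hK
        simp only [Set.mem_compl_iff, Set.mem_setOf_eq, not_not] at hx ⊢
        by_contra hxK
        exact hx (hCf0 x fun hC => hxK (Set.mem_union_left _ hC))
      have hcert : ∫⁻ x, ENNReal.ofReal (Φ (‖((wT a w)^[0] (f + g) - g) x‖ / k0)) ∂μ ≤ 1 := by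
        refine le_trans (le_of_eq (lintegral_congr_ae ?_)) certf
        filter_upwards [hf0ae] with x hx
        have : ((wT a w)^[0] (f + g) - g) x = f x - f₀ x := by
          simp only [Function.iterate_zero, id_eq, Pi.sub_apply, Pi.add_apply, hx]; ring
        rw [this]
      exact luxNorm_lt hk0 (by rw [hk0def]; linarith) hcert
  · have hKpos : 0 < μ K := lt_of_le_of_ne zero_le (Ne.symm hK)
    obtain ⟨E, nseq, hnmono, hEprop, htendE, hsmall⟩ := hcond K hKc hKpos
    set τ : ℝ := ((μ K).toReal + 1)⁻¹ with hτdef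
    have hτ : 0 < τ := by positivity
    obtain ⟨δ, hδ0, hδ⟩ : ∃ δ > 0, ∀ t : ℝ, |t| < δ → |Φ t| < τ := by
      obtain ⟨δ, hδ0, hδ⟩ := Metric.continuous_iff.1 hΦ.continuous 0 τ hτ
      refine ⟨δ, hδ0, fun t ht => ?_⟩
      have := hδ t (by simpa [Real.dist_eq] using ht)
      simpa [Real.dist_eq, hΦ.zero] using this
    set ε' : ℝ := (ε / (8 * R)) * (δ / 2) with hε'def
    have hε'0 : 0 < ε' := by positivity
    have hval : R * ε' / k0 = δ / 2 := by
      rw [hk0def, hε'def]; field_simp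
    have hΦv : Φ (R * ε' / k0) < τ := by
      rw [hval]
      exact lt_of_le_of_lt (le_abs_self _)
        (hδ _ (by rw [abs_of_pos (by positivity)]; linarith))
    obtain ⟨N₁, hN₁⟩ := hsmall ε' hε'0
    set δ₀ : ℝ≥0∞ := (ENNReal.ofReal (Φ (R / k0)))⁻¹ with hδ₀def
    have hδ₀pos : 0 < δ₀ := ENNReal.inv_pos.2 ENNReal.ofReal_ne_top
    have htd : Tendsto (fun k => μ K - μ (E k)) atTop (𝓝 0) := by
      have := ENNReal.Tendsto.sub (tendsto_const_nhds (x := μ K)) htendE (Or.inl hKfin)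
      simpa using this
    obtain ⟨N₂, hN₂⟩ := Filter.eventually_atTop.1 (htd.eventually_lt_const hδ₀pos)
    set j := max N₁ N₂ with hjdef
    set Ej := E j with hEjdef
    set n := nseq j with hndef
    have hEm : MeasurableSet Ej := (hEprop j).1
    have hEK : Ej ⊆ K := (hEprop j).2
    have hEfin : μ Ej ≠ ⊤ := ne_top_of_le_ne_top hKfin (measure_mono hEK)
    have hdiff : μ (K \ Ej) < δ₀ := by
      rw [measure_diff hEK hEm.nullMeasurableSet hEfin]
      exact hN₂ j (le_max_right _ _)
    have hphismall : ∀ x ∈ Ej, phiW a w n x < ε' ∧ phiTW a w n x < ε' :=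
      hN₁ j (le_max_left _ _)
    set f₁ : G → ℂ := Ej.indicator f₀ with hf₁def
    set g₁ : G → ℂ := Ej.indicator g₀ with hg₁def
    have mf₁ : Measurable f₁ := mf₀.indicator hEm
    have mg₁ : Measurable g₁ := mg₀.indicator hEm
    have hf₁R : ∀ x, ‖f₁ x‖ ≤ R := by
      intro x
      rw [hf₁def]
      by_cases hx : x ∈ Ej
      · rw [Set.indicator_of_mem hx]; exact hf₀R x
      · rw [Set.indicator_of_notMem hx]; simpa using hR0.le
    have hg₁R : ∀ x, ‖g₁ x‖ ≤ R := by
      intro x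
      rw [hg₁def]
      by_cases hx : x ∈ Ej
      · rw [Set.indicator_of_mem hx]; exact hg₀R x
      · rw [Set.indicator_of_notMem hx]; simpa using hR0.le
    set Sg : G → ℂ := (wS a w)^[n] g₁ with hSgdef
    have hSg_eq : ∀ x, Sg x =
        g₁ (x * a ^ n) / ((∏ i ∈ Finset.range n, w (x * a ^ (i + 1)) : ℝ) : ℂ) := by
      intro x; rw [hSgdef, wS_iter]
    have mSg : Measurable Sg := by
      rw [hSgdef, wS_iter]
      exact (mg₁.comp (measurable_mul_const _)).div
        ((Complex.continuous_ofReal.comp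
          (continuous_finset_prod _ fun i _ => hw.comp (continuous_mul_right _))).measurable)
    have hprodge : ∀ (x : G) (m : ℕ), c ^ m ≤ ∏ i ∈ Finset.range m, w (x * a ^ (i + 1)) := by
      intro x m
      calc c ^ m = ∏ i ∈ Finset.range m, c := by rw [Finset.prod_const, Finset.card_range]
        _ ≤ _ := Finset.prod_le_prod (fun _ _ => hc.le) (fun i _ => hcw _)
    have hSgbd : ∀ x, ‖Sg x‖ ≤ R / c ^ n := by
      intro x
      rw [hSg_eq x, norm_div, Complex.norm_real, Real.norm_eq_abs,
        abs_of_pos (lt_of_lt_of_le (by positivity) (hprodge x n))]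
      exact div_le_div₀ hR0.le (hg₁R _) (by positivity) (hprodge x n)
    set h : G → ℂ := f₁ + Sg with hhdef
    have memh : MemOrlicz Φ μ h := by
      refine ⟨mf₁.add mSg, 1, one_pos, ?_⟩
      set S : Set G := K ∪ (fun x => x * a ^ n) ⁻¹' K with hSdef
      have hSmeas : MeasurableSet S :=
        hKcl.measurableSet.union ((hKcl.preimage (continuous_mul_right _)).measurableSet)
      have hSfin : μ S < ⊤ := by
        refine lt_of_le_of_lt (measure_union_le _ _) (ENNReal.add_lt_top.2
          ⟨hKc.measure_lt_top, ?_⟩)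
        exact (((Homeomorph.mulRight (a ^ n)).isCompact_preimage.2 hKc).measure_lt_top)
      set B : ℝ := R + R / c ^ n with hBdef
      have hbd : ∀ x, ‖h x‖ ≤ B := fun x =>
        le_trans (norm_add_le _ _) (add_le_add (hf₁R x) (hSgbd x))
      have hsupp : ∀ x ∉ S, h x = 0 := by
        intro x hx
        simp only [hSdef, Set.mem_union, Set.mem_preimage, not_or] at hx
        have hx1 : x ∉ Ej := fun hmem => hx.1 (hEK hmem)
        have hx2 : x * a ^ n ∉ Ej := fun hmem => hx.2 (hEK hmem)
        show f₁ x + Sg x = 0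
        rw [hf₁def, Set.indicator_of_notMem hx1, hSg_eq x, hg₁def,
          Set.indicator_of_notMem hx2]
        simp
      calc ∫⁻ x, ENNReal.ofReal (Φ (1 * ‖h x‖)) ∂μ
          ≤ ∫⁻ x, S.indicator (fun _ => ENNReal.ofReal (Φ B)) x ∂μ := by
            refine lintegral_mono fun x => ?_
            by_cases hx : x ∈ S
            · rw [Set.indicator_of_mem hx]
              exact ENNReal.ofReal_le_ofReal
                (hΦ.mono (by positivity) (by rw [one_mul]; exact hbd x))
            · rw [Set.indicator_of_notMem hx, hsupp x hx]
              simp [hΦ.zero]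
        _ = ENNReal.ofReal (Φ B) * μ S := by
            rw [lintegral_indicator hSmeas, setLIntegral_const]
        _ < ⊤ := ENNReal.mul_lt_top ENNReal.ofReal_lt_top hSfin
    -- bound used for the small-measure pieces
    have hδ₀mul : ENNReal.ofReal (Φ (R / k0)) * μ (K \ Ej) ≤ 1 := by
      refine le_trans (mul_le_mul_right hdiff.le _) ?_
      rw [hδ₀def]
      exact ENNReal.mul_inv_le_one _
    -- bound used for the good pieces
    have hτμ : ENNReal.ofReal τ * μ K ≤ 1 := by
      conv_lhs => rw [← ENNReal.ofReal_toReal hKfin]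
      rw [← ENNReal.ofReal_mul hτ.le]
      refine le_trans (ENNReal.ofReal_le_ofReal ?_) (le_of_eq ENNReal.ofReal_one)
      have ht0 : 0 ≤ (μ K).toReal := ENNReal.toReal_nonneg
      have h1 : τ * ((μ K).toReal + 1) = 1 := inv_mul_cancel₀ (by positivity)
      nlinarith [hτ.le]
    have hgood : ENNReal.ofReal (Φ (R * ε' / k0)) * μ Ej ≤ 1 := by
      refine le_trans (mul_le_mul' (ENNReal.ofReal_le_ofReal hΦv.le) (measure_mono hEK)) hτμ
    -- certificate: f₁ - f₀
    have c₂ : ∫⁻ x, ENNReal.ofReal (Φ (‖f₁ x - f₀ x‖ / k0)) ∂μ ≤ 1 := by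
      have hpt : ∀ x, ENNReal.ofReal (Φ (‖f₁ x - f₀ x‖ / k0)) ≤
          (K \ Ej).indicator (fun _ => ENNReal.ofReal (Φ (R / k0))) x := by
        intro x
        by_cases hx1 : x ∈ Ej
        · rw [hf₁def, Set.indicator_of_mem hx1]
          simp [hΦ.zero]
        · rw [hf₁def, Set.indicator_of_notMem hx1]
          by_cases hx2 : x ∈ K
          · have hmem : x ∈ K \ Ej := ⟨hx2, hx1⟩
            rw [Set.indicator_of_mem hmem]
            refine ENNReal.ofReal_le_ofReal (hΦ.mono (by positivity) ?_)
            rw [zero_sub, norm_neg]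
            gcongr
            exact hf₀R x
          · rw [hCf0 x (fun hc' => hx2 (Set.mem_union_left _ hc'))]
            simp [hΦ.zero]
      calc ∫⁻ x, ENNReal.ofReal (Φ (‖f₁ x - f₀ x‖ / k0)) ∂μ
          ≤ ∫⁻ x, (K \ Ej).indicator (fun _ => ENNReal.ofReal (Φ (R / k0))) x ∂μ :=
            lintegral_mono hpt
        _ ≤ ENNReal.ofReal (Φ (R / k0)) * μ (K \ Ej) := lintegral_indicator_const_le _ _
        _ ≤ 1 := hδ₀mul
    -- certificate: g₁ - g₀
    have c₅ : ∫⁻ x, ENNReal.ofReal (Φ (‖g₁ x - g₀ x‖ / k0)) ∂μ ≤ 1 := by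
      have hpt : ∀ x, ENNReal.ofReal (Φ (‖g₁ x - g₀ x‖ / k0)) ≤
          (K \ Ej).indicator (fun _ => ENNReal.ofReal (Φ (R / k0))) x := by
        intro x
        by_cases hx1 : x ∈ Ej
        · rw [hg₁def, Set.indicator_of_mem hx1]
          simp [hΦ.zero]
        · rw [hg₁def, Set.indicator_of_notMem hx1]
          by_cases hx2 : x ∈ K
          · have hmem : x ∈ K \ Ej := ⟨hx2, hx1⟩
            rw [Set.indicator_of_mem hmem]
            refine ENNReal.ofReal_le_ofReal (hΦ.mono (by positivity) ?_)
            rw [zero_sub, norm_neg]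
            gcongr
            exact hg₀R x
          · rw [hCg0 x (fun hc' => hx2 (Set.mem_union_right _ hc'))]
            simp [hΦ.zero]
      calc ∫⁻ x, ENNReal.ofReal (Φ (‖g₁ x - g₀ x‖ / k0)) ∂μ
          ≤ ∫⁻ x, (K \ Ej).indicator (fun _ => ENNReal.ofReal (Φ (R / k0))) x ∂μ :=
            lintegral_mono hpt
        _ ≤ ENNReal.ofReal (Φ (R / k0)) * μ (K \ Ej) := lintegral_indicator_const_le _ _
        _ ≤ 1 := hδ₀mul
    -- certificate: the translated part wT^[n] f₁
    have hphiWpos : ∀ y, 0 < phiW a w n y := fun y => by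
      rw [phiW_eq]; exact Finset.prod_pos fun i _ => hwpos _
    have hphiTWpos : ∀ y, 0 < phiTW a w n y := by
      intro y
      have : (0:ℝ) < ∏ i ∈ Finset.range n, w (y * a ^ (-(i:ℤ))) :=
        Finset.prod_pos fun i _ => hwpos _
      simpa [phiTW] using inv_pos.2 this
    have c₄ : ∫⁻ x, ENNReal.ofReal (Φ (‖(wT a w)^[n] f₁ x‖ / k0)) ∂μ ≤ 1 := by
      rw [← lintegral_mul_right_eq_self
        (fun x => ENNReal.ofReal (Φ (‖(wT a w)^[n] f₁ x‖ / k0))) (a ^ n)]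
      have hkey : ∀ y : G, (wT a w)^[n] f₁ (y * a ^ n) = ((phiW a w n y : ℝ) : ℂ) * f₁ y := by
        intro y
        rw [wT_iter]
        simp only
        rw [mul_inv_cancel_right, ← key_T a w n y]
      have hpt : ∀ y, ENNReal.ofReal (Φ (‖(wT a w)^[n] f₁ (y * a ^ n)‖ / k0)) ≤
          Ej.indicator (fun _ => ENNReal.ofReal (Φ (R * ε' / k0))) y := by
        intro y
        rw [hkey y]
        by_cases hy : y ∈ Ej
        · rw [Set.indicator_of_mem hy]
          refine ENNReal.ofReal_le_ofReal (hΦ.mono (by positivity) ?_)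
          rw [norm_mul, Complex.norm_real, Real.norm_eq_abs, abs_of_pos (hphiWpos y)]
          have hle : phiW a w n y * ‖f₁ y‖ ≤ R * ε' := by
            have := mul_le_mul (hphismall y hy).1.le (hf₁R y) (norm_nonneg _) hε'0.le
            linarith [this]
          gcongr
        · rw [Set.indicator_of_notMem hy, hf₁def, Set.indicator_of_notMem hy]
          simp [hΦ.zero]
      calc ∫⁻ y, ENNReal.ofReal (Φ (‖(wT a w)^[n] f₁ (y * a ^ n)‖ / k0)) ∂μ
          ≤ ∫⁻ y, Ej.indicator (fun _ => ENNReal.ofReal (Φ (R * ε' / k0))) y ∂μ :=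
            lintegral_mono hpt
        _ ≤ ENNReal.ofReal (Φ (R * ε' / k0)) * μ Ej := lintegral_indicator_const_le _ _
        _ ≤ 1 := hgood
    -- certificate: Sg
    have c₃ : ∫⁻ x, ENNReal.ofReal (Φ (‖Sg x‖ / k0)) ∂μ ≤ 1 := by
      rw [← lintegral_mul_right_eq_self
        (fun x => ENNReal.ofReal (Φ (‖Sg x‖ / k0))) ((a ^ n)⁻¹)]
      have hkey : ∀ y : G, Sg (y * (a ^ n)⁻¹) = g₁ y * ((phiTW a w n y : ℝ) : ℂ) := by
        intro y
        rw [hSg_eq, inv_mul_cancel_right, div_eq_mul_inv]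
        congr 1
        rw [← Complex.ofReal_inv, key_S a w n y]
      have hpt : ∀ y, ENNReal.ofReal (Φ (‖Sg (y * (a ^ n)⁻¹)‖ / k0)) ≤
          Ej.indicator (fun _ => ENNReal.ofReal (Φ (R * ε' / k0))) y := by
        intro y
        rw [hkey y]
        by_cases hy : y ∈ Ej
        · rw [Set.indicator_of_mem hy]
          refine ENNReal.ofReal_le_ofReal (hΦ.mono (by positivity) ?_)
          rw [norm_mul, Complex.norm_real, Real.norm_eq_abs, abs_of_pos (hphiTWpos y)]
          have hle : ‖g₁ y‖ * phiTW a w n y ≤ R * ε' :=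
            mul_le_mul (hg₁R y) (hphismall y hy).2.le (hphiTWpos y).le hR0.le
          gcongr
        · rw [Set.indicator_of_notMem hy, hg₁def, Set.indicator_of_notMem hy]
          simp [hΦ.zero]
      calc ∫⁻ y, ENNReal.ofReal (Φ (‖Sg (y * (a ^ n)⁻¹)‖ / k0)) ∂μ
          ≤ ∫⁻ y, Ej.indicator (fun _ => ENNReal.ofReal (Φ (R * ε' / k0))) y ∂μ :=
            lintegral_mono hpt
        _ ≤ ENNReal.ofReal (Φ (R * ε' / k0)) * μ Ej := lintegral_indicator_const_le _ _
        _ ≤ 1 := hgood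
    -- assemble: h - f
    have m1 := modular_add μ hΦ (mf₁.sub mf₀) (mf₀.sub hf.1) hk0 hk0 c₂ c₁'
    have m2 := modular_add μ hΦ ((mf₁.sub mf₀).add (mf₀.sub hf.1)) mSg
      (by positivity) hk0 m1 c₃
    have lt1 : luxNorm Φ μ (h - f) < ε := by
      refine luxNorm_lt (k := k0 + k0 + k0) (by positivity) (by rw [hk0def]; linarith) ?_
      refine le_trans (le_of_eq (lintegral_congr fun x => ?_)) m2
      have hx : (h - f) x = ((f₁ x - f₀ x) + (f₀ x - f x)) + Sg x := by
        simp only [Pi.sub_apply, hhdef, Pi.add_apply]; ring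
      rw [hx]; rfl
    -- assemble: wT^[n] h - g
    have hwTh : (wT a w)^[n] h = (wT a w)^[n] f₁ + g₁ := by
      rw [hhdef, wT_iter_add, hSgdef, wT_iter_wS_iter a w hwne' g₁ n]
    have mT : Measurable ((wT a w)^[n] f₁) := by
      rw [wT_iter]
      exact ((Complex.continuous_ofReal.comp
        (continuous_finset_prod _ fun i _ => hw.comp (continuous_mul_right _))).measurable).mul
        (mf₁.comp (measurable_mul_const _))
    have m3 := modular_add μ hΦ mT (mg₁.sub mg₀) hk0 hk0 c₄ c₅
    have m4 := modular_add μ hΦ (mT.add (mg₁.sub mg₀)) (mg₀.sub hg.1)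
      (by positivity) hk0 m3 c₆'
    have lt2 : luxNorm Φ μ ((wT a w)^[n] h - g) < ε := by
      refine luxNorm_lt (k := k0 + k0 + k0) (by positivity) (by rw [hk0def]; linarith) ?_
      refine le_trans (le_of_eq (lintegral_congr fun x => ?_)) m4
      have hx : ((wT a w)^[n] h - g) x =
          (((wT a w)^[n] f₁ x + (g₁ x - g₀ x)) + (g₀ x - g x)) := by
        rw [Pi.sub_apply, hwTh, Pi.add_apply]; ring
      rw [hx]; rfl
    exact ⟨h, memh, n, lt1, lt2⟩
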